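/- Let D be the distance matrix of K_{n₁,...,n_m} and suppose β = Σ_{i=1}^m nᵢ Π_{j≠i}(nⱼ-2) + Π_{i=1}^m (nᵢ-2) ≠ 0. Then D is invertible, and in the m×m block partition according to the parts, the (i,i) block of D⁻¹ is ((2β_{\hat{nᵢ}} - γ_{\hat{nᵢ}})/(2β)) J_{nᵢ} - (1/2) I_{nᵢ}, and for i ≠ j the (i,j) block is -(Π_{l≠i,j}(n_l-2)/β) J_{nᵢ×nⱼ}. -/

import Mathlib

open Finset Matrix

theorem stmt11 (m : ℕ) (hm : 2 ≤ m) (n : Fin m → ℕ) (hn : ∀ i, 1 ≤ n i)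
    (D : Matrix ((i : Fin m) × Fin (n i)) ((i : Fin m) × Fin (n i)) ℝ)
    (hD : ∀ u v, D u v = if u = v then 0 else if u.1 = v.1 then 2 else 1)
    (γ β : Finset (Fin m) → ℝ)
    (hγ : ∀ S, γ S = ∑ i ∈ S, (n i : ℝ) * ∏ j ∈ S.erase i, ((n j : ℝ) - 2))
    (hβ : ∀ S, β S = γ S + ∏ i ∈ S, ((n i : ℝ) - 2))
    (hβ0 : β Finset.univ ≠ 0) :
    IsUnit D.det ∧
      ∀ u v : (i : Fin m) × Fin (n i),
        D⁻¹ u v =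
          if u.1 = v.1 then
            (2 * β (Finset.univ.erase u.1) - γ (Finset.univ.erase u.1))
                / (2 * β Finset.univ)
              - (if u = v then (1 : ℝ) / 2 else 0)
          else
            -(∏ l ∈ (Finset.univ.erase u.1).erase v.1, ((n l : ℝ) - 2))
              / β Finset.univ := by
  classical
  set B : Matrix ((i : Fin m) × Fin (n i)) ((i : Fin m) × Fin (n i)) ℝ :=
    fun u v =>
      if u.1 = v.1 then
        (2 * β (Finset.univ.erase u.1) - γ (Finset.univ.erase u.1))
            / (2 * β Finset.univ)
          - (if u = v then (1 : ℝ) / 2 else 0)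
      else
        -(∏ l ∈ (Finset.univ.erase u.1).erase v.1, ((n l : ℝ) - 2))
          / β Finset.univ with hBdef
  -- basic structural fact
  have fact1 : ∀ i : Fin m, β Finset.univ =
      (n i : ℝ) * ∏ j ∈ Finset.univ.erase i, ((n j : ℝ) - 2)
        + ((n i : ℝ) - 2) * β (Finset.univ.erase i) := by
    intro i
    rw [hβ, hβ, hγ, hγ]
    rw [← Finset.add_sum_erase _ _ (Finset.mem_univ i),
        ← Finset.mul_prod_erase Finset.univ _ (Finset.mem_univ i)]
    have hc : ∀ j ∈ Finset.univ.erase i,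
        (n j : ℝ) * ∏ l ∈ Finset.univ.erase j, ((n l : ℝ) - 2)
          = ((n i : ℝ) - 2) * ((n j : ℝ) * ∏ l ∈ (Finset.univ.erase i).erase j, ((n l : ℝ) - 2)) := by
      intro j hj
      have hji : j ≠ i := Finset.ne_of_mem_erase hj
      have hi : i ∈ Finset.univ.erase j := Finset.mem_erase.2 ⟨hji.symm, Finset.mem_univ i⟩
      rw [← Finset.mul_prod_erase _ _ hi, Finset.erase_right_comm]
      ring
    rw [Finset.sum_congr rfl hc, ← Finset.mul_sum]
    ring
  have key : D * B = 1 := by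
    ext ⟨i, a⟩ ⟨k, b⟩
    rw [Matrix.mul_apply, ← Finset.univ_sigma_univ, Finset.sum_sigma]
    by_cases hik : i = k
    · subst hik
      set c : ℝ := (2 * β (Finset.univ.erase i) - γ (Finset.univ.erase i))
          / (2 * β Finset.univ) with hc
      -- inner sums for j ≠ i
      have hin : ∀ j ∈ Finset.univ.erase i,
          (∑ x : Fin (n j), D ⟨i, a⟩ ⟨j, x⟩ * B ⟨j, x⟩ ⟨i, b⟩)
            = -((n j : ℝ) * ∏ l ∈ (Finset.univ.erase i).erase j, ((n l : ℝ) - 2))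
                / β Finset.univ := by
        intro j hj
        have hji : j ≠ i := Finset.ne_of_mem_erase hj
        have hterm : ∀ x : Fin (n j), D ⟨i, a⟩ ⟨j, x⟩ * B ⟨j, x⟩ ⟨i, b⟩
            = -(∏ l ∈ (Finset.univ.erase j).erase i, ((n l : ℝ) - 2)) / β Finset.univ := by
          intro x
          rw [hD]
          simp [hBdef, hji, Ne.symm hji, Sigma.mk.inj_iff]
        rw [Finset.sum_congr rfl (fun x _ => hterm x), Finset.sum_const,
          Finset.erase_right_comm]
        simp
        ring
      -- inner sum for j = i
      have hii : (∑ x : Fin (n i), D ⟨i, a⟩ ⟨i, x⟩ * B ⟨i, x⟩ ⟨i, b⟩)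
          = (n i : ℝ) * (2 * c) - 1 - 2 * c + (if a = b then 1 else 0) := by
        have hterm : ∀ x : Fin (n i), D ⟨i, a⟩ ⟨i, x⟩ * B ⟨i, x⟩ ⟨i, b⟩
            = 2 * c - (if x = b then 1 else 0) - (if x = a then 2 * c else 0)
              + (if x = a then (if a = b then 1 else 0) else 0) := by
          intro x
          rw [hD]
          by_cases hxa : x = a
          · subst hxa
            by_cases hxb : x = b
            · subst hxb; simp
            · simp [hBdef, Sigma.mk.inj_iff, hxb, ← hc]
          · by_cases hxb : x = b
            · subst hxb
              simp [hBdef, Sigma.mk.inj_iff, Ne.symm hxa, hxa, ← hc] <;> ring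
            · simp [hBdef, Sigma.mk.inj_iff, Ne.symm hxa, hxa, hxb, ← hc] <;> ring
        rw [Finset.sum_congr rfl (fun x _ => hterm x)]
        rw [Finset.sum_add_distrib, Finset.sum_sub_distrib, Finset.sum_sub_distrib,
          Finset.sum_const, Finset.sum_ite_eq' Finset.univ b, Finset.sum_ite_eq' Finset.univ a,
          Finset.sum_ite_eq' Finset.univ a]
        simp [mul_comm]
      rw [← Finset.add_sum_erase _ _ (Finset.mem_univ i), hii,
        Finset.sum_congr rfl hin]
      have hsum : (∑ j ∈ Finset.univ.erase i,
          -((n j : ℝ) * ∏ l ∈ (Finset.univ.erase i).erase j, ((n l : ℝ) - 2))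
              / β Finset.univ) = -γ (Finset.univ.erase i) / β Finset.univ := by
        rw [hγ, ← Finset.sum_div, ← Finset.sum_neg_distrib]
      rw [hsum]
      rw [Matrix.one_apply]
      have h1 : β (Finset.univ.erase i) = γ (Finset.univ.erase i)
          + ∏ l ∈ Finset.univ.erase i, ((n l : ℝ) - 2) := hβ _
      have h2 := fact1 i
      have hid : ((n i : ℝ) - 1) * (2 * β (Finset.univ.erase i) - γ (Finset.univ.erase i))
          - γ (Finset.univ.erase i) = β Finset.univ := by
        linear_combination (n i : ℝ) * h1 - h2
      have hone : ((if (⟨i,a⟩ : (i : Fin m) × Fin (n i)) = ⟨i,b⟩ then (1:ℝ) else 0))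
          = (if a = b then 1 else 0) := by simp [Sigma.mk.inj_iff]
      rw [hone]
      have hkey : (n i : ℝ) * (2 * c) - 2 * c + (-γ (Finset.univ.erase i) / β Finset.univ)
          = 1 := by
        rw [hc]
        field_simp
        linear_combination hid
      linarith [hkey]
    · -- i ≠ k
      have hki : k ≠ i := fun h => hik h.symm
      set c : ℝ := (2 * β (Finset.univ.erase k) - γ (Finset.univ.erase k))
          / (2 * β Finset.univ) with hc
      set Q : ℝ := ∏ l ∈ (Finset.univ.erase k).erase i, ((n l : ℝ) - 2) with hQ
      have hkmem : k ∈ Finset.univ.erase i := Finset.mem_erase.2 ⟨hki, Finset.mem_univ k⟩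
      have himem : i ∈ Finset.univ.erase k := Finset.mem_erase.2 ⟨fun h => hik h, Finset.mem_univ i⟩
      -- j = i term
      have htI : (∑ x : Fin (n i), D ⟨i, a⟩ ⟨i, x⟩ * B ⟨i, x⟩ ⟨k, b⟩)
          = (2 * (n i : ℝ) - 2) * (-Q / β Finset.univ) := by
        have hterm : ∀ x : Fin (n i), D ⟨i, a⟩ ⟨i, x⟩ * B ⟨i, x⟩ ⟨k, b⟩
            = (2 - (if x = a then 2 else 0)) * (-Q / β Finset.univ) := by
          intro x
          rw [hD]
          have hBe : B ⟨i, x⟩ ⟨k, b⟩ = -Q / β Finset.univ := by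
            simp [hBdef, hik]
            rw [Finset.erase_right_comm]
          rw [hBe]
          by_cases hxa : x = a
          · subst hxa; simp
          · simp [Sigma.mk.inj_iff, hxa, Ne.symm hxa]
        rw [Finset.sum_congr rfl (fun x _ => hterm x), ← Finset.sum_mul,
          Finset.sum_sub_distrib, Finset.sum_const, Finset.sum_ite_eq' Finset.univ a]
        simp only [Finset.mem_univ, if_true, nsmul_eq_mul, Finset.card_univ, Fintype.card_fin]
        ring
      -- j = k term
      have htK : (∑ x : Fin (n k), D ⟨i, a⟩ ⟨k, x⟩ * B ⟨k, x⟩ ⟨k, b⟩)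
          = (n k : ℝ) * c - 1 / 2 := by
        have hterm : ∀ x : Fin (n k), D ⟨i, a⟩ ⟨k, x⟩ * B ⟨k, x⟩ ⟨k, b⟩
            = c - (if x = b then 1 / 2 else 0) := by
          intro x
          rw [hD]
          simp [hBdef, Sigma.mk.inj_iff, hik, ← hc]
        rw [Finset.sum_congr rfl (fun x _ => hterm x), Finset.sum_sub_distrib,
          Finset.sum_const, Finset.sum_ite_eq' Finset.univ b]
        simp [mul_comm]
      -- other terms
      have htJ : ∀ j ∈ (Finset.univ.erase i).erase k,
          (∑ x : Fin (n j), D ⟨i, a⟩ ⟨j, x⟩ * B ⟨j, x⟩ ⟨k, b⟩)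
            = -((n j : ℝ) * ∏ l ∈ (Finset.univ.erase k).erase j, ((n l : ℝ) - 2))
                / β Finset.univ := by
        intro j hj
        have hjk : j ≠ k := Finset.ne_of_mem_erase hj
        have hji : j ≠ i := Finset.ne_of_mem_erase (Finset.mem_of_mem_erase hj)
        have hterm : ∀ x : Fin (n j), D ⟨i, a⟩ ⟨j, x⟩ * B ⟨j, x⟩ ⟨k, b⟩
            = -(∏ l ∈ (Finset.univ.erase j).erase k, ((n l : ℝ) - 2)) / β Finset.univ := by
          intro x
          rw [hD]
          simp [hBdef, hji, Ne.symm hji, hjk, Sigma.mk.inj_iff]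
        rw [Finset.sum_congr rfl (fun x _ => hterm x), Finset.sum_const,
          Finset.erase_right_comm]
        simp
        ring
      rw [← Finset.add_sum_erase _ _ (Finset.mem_univ i),
        ← Finset.add_sum_erase _ _ hkmem, htI, htK, Finset.sum_congr rfl htJ]
      have hsum : (∑ j ∈ (Finset.univ.erase i).erase k,
          -((n j : ℝ) * ∏ l ∈ (Finset.univ.erase k).erase j, ((n l : ℝ) - 2))
              / β Finset.univ)
          = -(γ (Finset.univ.erase k) - (n i : ℝ) * Q) / β Finset.univ := by
        have hset : (Finset.univ.erase i).erase k = (Finset.univ.erase k).erase i :=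
          Finset.erase_right_comm
        rw [hset, ← Finset.sum_div, hγ (Finset.univ.erase k),
          ← Finset.add_sum_erase _ _ himem, ← hQ, Finset.sum_neg_distrib]
        ring
      rw [hsum]
      rw [Matrix.one_apply]
      have hne : (⟨i,a⟩ : (i : Fin m) × Fin (n i)) ≠ ⟨k,b⟩ := by
        simp [Sigma.mk.inj_iff, hik]
      rw [if_neg hne]
      have h1 : β (Finset.univ.erase k) = γ (Finset.univ.erase k)
          + ∏ l ∈ Finset.univ.erase k, ((n l : ℝ) - 2) := hβ _
      have h2 := fact1 k
      have h3 : (∏ l ∈ Finset.univ.erase k, ((n l : ℝ) - 2)) = ((n i : ℝ) - 2) * Q := by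
        rw [hQ, ← Finset.mul_prod_erase _ _ himem]
      have hidK : (4 - 2 * (n i : ℝ)) * Q + 2 * (n k : ℝ) * β (Finset.univ.erase k)
          - (n k : ℝ) * γ (Finset.univ.erase k) - β Finset.univ
          - 2 * γ (Finset.univ.erase k) = 0 := by
        linear_combination ((n k : ℝ) + 2) * h1 - h2 + 2 * h3
      rw [hc]
      field_simp
      linear_combination hidK
  have hu : IsUnit D.det := Matrix.isUnit_det_of_right_inverse key
  refine ⟨hu, fun u v => ?_⟩
  rw [Matrix.inv_eq_right_inv key]
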